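/- arXiv:2408.01906 — 4 statements merged into one kernel-verified Lean document; each statement's English description precedes it below -/
import Mathlib

section
/- Let m ≥ 2 and n = 2^m − 1, and let a be an odd integer with 1 ≤ a ≤ n − 1 such that l_a = m (i.e., the 2-cyclotomic coset C_a of a modulo n has exactly m elements). Then the number of even integers in C_a equals m − wt_2(a), and the number of even integers in C_{n−a} equals wt_2(a). -/
open Polynomial

noncomputable def wt2 (a : ℕ) : ℕ := (Nat.digits 2 a).sum

noncomputable def ell (m i : ℕ) : ℕ :=
  sInf {l : ℕ | 0 < l ∧ i * 2 ^ l % (2 ^ m - 1) = i % (2 ^ m - 1)}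

noncomputable def coset (m i : ℕ) : Finset ℕ :=
  (Finset.range (ell m i)).image (fun j => i * 2 ^ j % (2 ^ m - 1))

noncomputable def rho (m i : ℕ) : ℕ := ((coset m i).filter (fun x => x % 2 = 0)).card

noncomputable def vv (m i : ℕ) : ℕ := m * rho m i / ell m i % 2

noncomputable def Tset (m j : ℕ) : Finset ℕ :=
  (Finset.range (2 ^ m - 1)).filter (fun i => vv m i = j)

noncomputable def Nset (m j : ℕ) : Finset ℕ :=
  (Finset.range (2 ^ m - 1)).filter (fun a => a ≠ 0 ∧ wt2 a % 2 = j)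

noncomputable def epsilon (h a : ℕ) : ℕ :=
  if a = 2 ^ h - 1 then 1 else sInf {t : ℕ | 2 ^ h - 1 ≤ 2 ^ t * a}

noncomputable def kappa (h a : ℕ) : ℕ := epsilon h a % 2

noncomputable def leader (m i : ℕ) : ℕ := sInf {x : ℕ | x ∈ coset m i}

noncomputable def uu (m h i : ℕ) : ℕ :=
  if leader m i = 1 then (vv m 1 + h + 1) % 2
  else if leader m i % 2 = 1 ∧ leader m i ≤ 2 ^ h - 1 then
    (kappa h (leader m i) + vv m (leader m i)) % 2
  else vv m (leader m i)

noncomputable def Dset (m h j : ℕ) : Finset ℕ :=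
  (Finset.range (2 ^ m - 1)).filter (fun i => uu m h i = j)

noncomputable def cyclicCode (m : ℕ) (α : GaloisField 2 m) (T : Set ℕ) :
    Submodule (ZMod 2) (Polynomial (ZMod 2)) :=
  Polynomial.degreeLT (ZMod 2) (2 ^ m - 1) ⊓
    ⨅ j ∈ T, LinearMap.ker (Polynomial.aeval (α ^ j)).toLinearMap

def minDistGE (C : Submodule (ZMod 2) (Polynomial (ZMod 2))) (d : ℕ) : Prop :=
  ∀ c ∈ C, c ≠ 0 → d ≤ c.support.card

lemma wt2_succ' (a : ℕ) (ha : a ≠ 0) : (Nat.digits 2 a).sum = a % 2 + (Nat.digits 2 (a/2)).sum := by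
  rw [Nat.digits_def' (by norm_num : 1 < 2) (Nat.pos_of_ne_zero ha)]
  simp

lemma wt2_eq_card (m a : ℕ) (h : a < 2^m) :
    (Nat.digits 2 a).sum = ((Finset.range m).filter (fun i => a / 2^i % 2 = 1)).card := by
  induction m generalizing a with
  | zero =>
    interval_cases a
    simp
  | succ m ih =>
    rcases eq_or_ne a 0 with rfl | ha
    · simp
    · have hdiv : a / 2 < 2^m := by
        rw [pow_succ] at h; omega
      rw [wt2_succ' a ha, ih (a/2) hdiv]
      rw [Finset.card_filter, Finset.card_filter, Finset.sum_range_succ']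
      have h2 : ∀ i, a / 2^(i+1) % 2 = (a/2) / 2^i % 2 := by
        intro i
        rw [pow_succ', Nat.div_div_eq_div_mul]
      simp only [h2, pow_zero, Nat.div_one]
      have h3 : (if a % 2 = 1 then 1 else 0) = a % 2 := by
        rcases Nat.mod_two_eq_zero_or_one a with h'|h' <;> simp [h']
      rw [h3]
      omega

lemma rot (m a j : ℕ) (hj : j < m) (ha : a < 2^m - 1) :
    a * 2^j % (2^m - 1) = a / 2^(m-j) + a % 2^(m-j) * 2^j := by
  have hqr : 2^(m-j) * (a / 2^(m-j)) + a % 2^(m-j) = a := Nat.div_add_mod a _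
  have hAB : 2^(m-j) * 2^j = 2^m := by rw [← pow_add]; congr 1; omega
  have hApos : 1 ≤ 2^j := Nat.one_le_two_pow
  have hBpos : 0 < 2^(m-j) := Nat.pow_pos (by norm_num)
  have hmpos : 2 ≤ 2^m := by
    calc 2 = 2^1 := rfl
    _ ≤ 2^m := Nat.pow_le_pow_right (by norm_num) (by omega)
  have hqlt : a / 2^(m-j) + 1 ≤ 2^j :=
    Nat.div_lt_iff_lt_mul hBpos |>.mpr (by rw [Nat.mul_comm, hAB]; omega)
  have hrlt : a % 2^(m-j) + 1 ≤ 2^(m-j) := Nat.mod_lt a hBpos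
  -- abbreviate
  generalize hQ : a / 2^(m-j) = q at *
  generalize hR : a % 2^(m-j) = r at *
  generalize hAe : (2:ℕ)^j = A at *
  generalize hBe : (2:ℕ)^(m-j) = B at *
  have hbound : q + r * A + 2 ≤ 2^m := by
    rw [← hAB]
    rcases Nat.lt_or_ge (r+1) B with h' | h'
    · have h'' : (r+2) * A ≤ B * A := Nat.mul_le_mul_right A (by omega)
      nlinarith
    · have hrB : r + 1 = B := by omega
      have h1 : B * (q+1) < B * A := by
        have hx : B * (q+1) = B * q + B := by ring
        have hBA : B ≤ B * A := Nat.le_mul_of_pos_right B (by omega)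
        omega
      have hq2 : q + 2 ≤ A := by
        have := Nat.lt_of_mul_lt_mul_left h1
        omega
      nlinarith
  have e0 : a * A = 2^m * q + r * A := by rw [← hqr, ← hAB]; ring
  have e1 : 2^m * q = q * (2^m - 1) + q := by
    obtain ⟨k, hk⟩ : ∃ k, 2^m = k + 1 := ⟨2^m - 1, by omega⟩
    rw [hk, Nat.add_sub_cancel]; ring
  have key : a * A = q * (2^m - 1) + (q + r * A) := by omega
  rw [key, Nat.mul_comm, Nat.mul_add_mod, Nat.mod_eq_of_lt (by omega)]

lemma parity (m a j : ℕ) (hm : 1 ≤ m) (hj : j < m) (ha : a < 2^m - 1) :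
    (a * 2^j % (2^m-1)) % 2 = a / 2^((m-j) % m) % 2 := by
  rcases Nat.eq_zero_or_pos j with rfl | hj1
  · simp [Nat.mod_eq_of_lt ha, Nat.mod_self]
  · rw [rot m a j hj ha]
    rw [Nat.mod_eq_of_lt (show m - j < m by omega)]
    have h2 : 2 ∣ a % 2^(m-j) * 2^j := Dvd.dvd.mul_left (dvd_pow_self 2 (by omega)) _
    omega

lemma two_pow_cast (m : ℕ) (hm : 1 ≤ m) : ((2:ZMod (2^m-1)))^m = 1 := by
  have hmpos : 2 ≤ 2^m := by
    calc 2 = 2^1 := rfl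
    _ ≤ 2^m := Nat.pow_le_pow_right (by norm_num) (by omega)
  have h0 : ((2^m - 1 : ℕ) : ZMod (2^m-1)) = 0 := ZMod.natCast_self _
  have h1 : ((2:ZMod (2^m-1)))^m = ((2^m : ℕ) : ZMod (2^m-1)) := by push_cast; ring
  have h2 : (2^m : ℕ) = (2^m - 1) + 1 := by omega
  rw [h1, h2, Nat.cast_add, h0, Nat.cast_one, zero_add]

lemma cond_iff_zmod (m a l : ℕ) (ha : a < 2^m - 1) :
    (a * 2 ^ l % (2 ^ m - 1) = a % (2 ^ m - 1)) ↔
      ((a : ZMod (2^m-1)) * 2^l = a) := by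
  rw [show (a * 2^l % (2^m-1) = a % (2^m-1)) ↔ (a * 2^l) ≡ a [MOD 2^m-1] from Iff.rfl,
      ← ZMod.natCast_eq_natCast_iff]
  push_cast
  rfl

lemma cond_iff_zmod' (m a l : ℕ) :
    (a * 2 ^ l % (2 ^ m - 1) = a % (2 ^ m - 1)) ↔
      ((a : ZMod (2^m-1)) * 2^l = a) := by
  rw [show (a * 2^l % (2^m-1) = a % (2^m-1)) ↔ (a * 2^l) ≡ a [MOD 2^m-1] from Iff.rfl,
      ← ZMod.natCast_eq_natCast_iff]
  push_cast
  rfl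

lemma ell_compl (m a : ℕ) (ha : a ≤ 2^m - 1) :
    ell m (2^m - 1 - a) = ell m a := by
  unfold ell
  congr 1
  ext l
  simp only [Set.mem_setOf_eq]
  apply and_congr_right
  intro _
  rw [cond_iff_zmod' m (2^m-1-a) l, cond_iff_zmod' m a l]
  have hsub : ((2^m - 1 - a : ℕ) : ZMod (2^m-1)) = -(a : ZMod (2^m-1)) := by
    rw [Nat.cast_sub ha, ZMod.natCast_self, zero_sub]
  rw [hsub, neg_mul, neg_inj]

lemma f_injOn (m a : ℕ) (hm : 2 ≤ m) (hla : ell m a = m) :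
    ∀ i < m, ∀ j < m,
      a * 2^i % (2^m-1) = a * 2^j % (2^m-1) → i = j := by
  have key : ∀ i j, i < j → j < m → a * 2^i % (2^m-1) ≠ a * 2^j % (2^m-1) := by
    intro i j hij hjm heq
    have hc : ((a : ZMod (2^m-1)) * 2^i = a * 2^j) := by
      have := (ZMod.natCast_eq_natCast_iff _ _ _).mpr heq
      push_cast at this
      exact this
    have hc2 : ((a : ZMod (2^m-1)) * 2^(i + (m - j)) = a) := by
      have h3 : ((a : ZMod (2^m-1)) * 2^i) * 2^(m-j) = (a * 2^j) * 2^(m-j) := by rw [hc]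
      have h4 : ((a : ZMod (2^m-1)) * 2^j) * 2^(m-j) = a * 2^m := by
        rw [mul_assoc, ← pow_add]
        congr 2
        omega
      rw [h4, two_pow_cast m (by omega), mul_one] at h3
      rw [pow_add, ← mul_assoc]
      exact h3
    have hmem : (i + (m - j)) ∈ {l : ℕ | 0 < l ∧ a * 2 ^ l % (2 ^ m - 1) = a % (2 ^ m - 1)} :=
      ⟨by omega, (cond_iff_zmod' m a _).mpr hc2⟩
    have hlt : i + (m - j) < m := by omega
    exact Nat.notMem_of_lt_sInf (by rw [show sInf _ = ell m a from rfl, hla]; omega) hmem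
  intro i hi j hj heq
  rcases lt_trichotomy i j with h | h | h
  · exact absurd heq (key i j h hj)
  · exact h
  · exact absurd heq.symm (key j i h hi)

lemma invol (m j : ℕ) (hj : j < m) : (m - (m - j) % m) % m = j := by
  rcases Nat.eq_zero_or_pos j with rfl | hj1
  · simp
  · rw [Nat.mod_eq_of_lt (show m - j < m by omega),
        (show m - (m - j) = j by omega), Nat.mod_eq_of_lt hj]

lemma count_shift (m : ℕ) (hm : 1 ≤ m) (P : ℕ → Prop) [DecidablePred P] :
    ((Finset.range m).filter (fun j => P ((m-j)%m))).card =
    ((Finset.range m).filter (fun i => P i)).card := by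
  apply Finset.card_nbij' (i := fun j => (m-j)%m) (j := fun j => (m-j)%m)
  · intro a ha
    simp only [Finset.mem_coe, Finset.mem_filter, Finset.mem_range] at ha ⊢
    exact ⟨Nat.mod_lt _ (by omega), ha.2⟩
  · intro a ha
    simp only [Finset.mem_coe, Finset.mem_filter, Finset.mem_range] at ha ⊢
    refine ⟨Nat.mod_lt _ (by omega), ?_⟩
    rw [invol m a ha.1]
    exact ha.2
  · intro a ha
    simp only [Finset.mem_coe, Finset.mem_filter, Finset.mem_range] at ha
    exact invol m a ha.1
  · intro a ha
    simp only [Finset.mem_coe, Finset.mem_filter, Finset.mem_range] at ha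
    exact invol m a ha.1

theorem stmt0 (m a : ℕ) (hm : 2 ≤ m) (ha1 : a % 2 = 1) (ha2 : 1 ≤ a)
    (ha3 : a ≤ 2 ^ m - 1 - 1) (hla : ell m a = m) :
    rho m a = m - wt2 a ∧ rho m (2 ^ m - 1 - a) = wt2 a := by
  have hm4 : 4 ≤ 2^m := by
    calc (4:ℕ) = 2^2 := rfl
    _ ≤ 2^m := Nat.pow_le_pow_right (by norm_num) hm
  have ha' : a < 2^m - 1 := by omega
  have hnodd : (2^m - 1) % 2 = 1 := by
    have h2 : 2^m = 2 * 2^(m-1) := by rw [← pow_succ']; congr 1; omega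
    omega
  have hwt : wt2 a = ((Finset.range m).filter (fun i => a / 2^i % 2 = 1)).card :=
    wt2_eq_card m a (by omega)
  have hwtle : wt2 a ≤ m := by
    rw [hwt]
    calc ((Finset.range m).filter (fun i => a / 2^i % 2 = 1)).card
        ≤ (Finset.range m).card := Finset.card_filter_le _ _
    _ = m := Finset.card_range m
  -- part 1
  have hrho1 : rho m a
      = ((Finset.range m).filter (fun j => (a * 2^j % (2^m-1)) % 2 = 0)).card := by
    unfold rho coset
    rw [hla, Finset.filter_image]
    apply Finset.card_image_of_injOn
    intro i hi j hj h
    simp only [Finset.coe_filter, Set.mem_setOf_eq, Finset.mem_range] at hi hj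
    exact f_injOn m a hm hla i hi.1 j hj.1 h
  have hP : ∀ j ∈ Finset.range m,
      ((a * 2^j % (2^m-1)) % 2 = 0) ↔ (a / 2^((m-j)%m) % 2 = 0) := by
    intro j hj
    rw [parity m a j (by omega) (Finset.mem_range.mp hj) ha']
  have hrho1' := hrho1
  rw [Finset.filter_congr hP, count_shift m (by omega) (fun i => a / 2^i % 2 = 0)] at hrho1
  have hsplit := Finset.card_filter_add_card_filter_not
    (s := Finset.range m) (p := fun i => a / 2^i % 2 = 1)
  have hnegeq : (Finset.range m).filter (fun i => ¬ (a / 2^i % 2 = 1))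
      = (Finset.range m).filter (fun i => a / 2^i % 2 = 0) :=
    Finset.filter_congr (fun i _ => by omega)
  rw [hnegeq, Finset.card_range] at hsplit
  have part1 : rho m a = m - wt2 a := by rw [hrho1, hwt]; omega
  refine ⟨part1, ?_⟩
  -- part 2
  have hlb : ell m (2^m-1-a) = m := by rw [ell_compl m a (by omega), hla]
  have hrho2 : rho m (2^m-1-a)
      = ((Finset.range m).filter (fun j => ((2^m-1-a) * 2^j % (2^m-1)) % 2 = 0)).card := by
    unfold rho coset
    rw [hlb, Finset.filter_image]
    apply Finset.card_image_of_injOn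
    intro i hi j hj h
    simp only [Finset.coe_filter, Set.mem_setOf_eq, Finset.mem_range] at hi hj
    exact f_injOn m (2^m-1-a) hm hlb i hi.1 j hj.1 h
  have hfne : ∀ j : ℕ, a * 2^j % (2^m-1) ≠ 0 := by
    intro j h
    have hdvd : (2^m-1) ∣ a * 2^j := Nat.dvd_of_mod_eq_zero h
    have hcop : Nat.Coprime (2^m-1) 2 := Nat.coprime_two_right.mpr (Nat.odd_iff.mpr hnodd)
    have hda : (2^m-1) ∣ a := Nat.Coprime.dvd_of_dvd_mul_right (hcop.pow_right j) hdvd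
    have := Nat.le_of_dvd (by omega) hda
    omega
  have hcompl : ∀ j : ℕ, (2^m-1-a) * 2^j % (2^m-1) = (2^m-1) - (a * 2^j % (2^m-1)) := by
    intro j
    have h1 : a * 2^j % (2^m-1) < 2^m-1 := Nat.mod_lt _ (by omega)
    have h2 : (2^m-1-a) * 2^j % (2^m-1) < 2^m-1 := Nat.mod_lt _ (by omega)
    have hc : (((2^m-1) - (a * 2^j % (2^m-1)) : ℕ) : ZMod (2^m-1))
        = (((2^m-1-a) * 2^j % (2^m-1) : ℕ) : ZMod (2^m-1)) := by
      rw [Nat.cast_sub (le_of_lt h1), ZMod.natCast_self, zero_sub,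
          ZMod.natCast_mod, ZMod.natCast_mod]
      rw [Nat.cast_mul, Nat.cast_mul, Nat.cast_sub (show a ≤ 2^m-1 by omega),
          ZMod.natCast_self, zero_sub]
      ring
    have hmeq := (ZMod.natCast_eq_natCast_iff _ _ _).mp hc
    have h3 : (2^m-1) - (a*2^j % (2^m-1)) < 2^m-1 := by have := hfne j; omega
    unfold Nat.ModEq at hmeq
    rw [Nat.mod_eq_of_lt h3, Nat.mod_eq_of_lt h2] at hmeq
    exact hmeq.symm
  have hiff2 : ∀ j ∈ Finset.range m,
      (((2^m-1-a) * 2^j % (2^m-1)) % 2 = 0 ↔ ¬ ((a * 2^j % (2^m-1)) % 2 = 0)) := by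
    intro j _
    rw [hcompl j]
    have h1 : a * 2^j % (2^m-1) < 2^m-1 := Nat.mod_lt _ (by omega)
    omega
  rw [Finset.filter_congr hiff2] at hrho2
  have hsplit2 := Finset.card_filter_add_card_filter_not
    (s := Finset.range m) (p := fun j => (a * 2^j % (2^m-1)) % 2 = 0)
  rw [Finset.card_range] at hsplit2
  rw [hrho2]
  omega
end

section
/- Let m ≥ 2, n = 2^m − 1, and let a be an integer with gcd(a, n) = 1. Let j be an odd integer with 1 ≤ j ≤ 2^{m/2} if m is even, and with 1 ≤ j ≤ 2^{(m+1)/2} − 1 if m is odd, and set b = a·j mod n. Then l_b = m, i.e., the 2-cyclotomic coset of b modulo n has exactly m elements. -/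
open Polynomial

lemma aux_stmt1 (m a j n : ℕ) (hm : 2 ≤ m) (hn : n = 2 ^ m - 1)
    (hgcd : Nat.gcd a n = 1) (hj2 : 1 ≤ j)
    (hje : Even m → j ≤ 2 ^ (m / 2))
    (hjo : Odd m → j ≤ 2 ^ ((m + 1) / 2) - 1) :
    sInf {l : ℕ | 0 < l ∧ (a * j % n) * 2 ^ l % n = (a * j % n) % n} = m := by
  have h4 : 4 ≤ 2 ^ m := by
    calc (4:ℕ) = 2 ^ 2 := rfl
    _ ≤ 2 ^ m := Nat.pow_le_pow_right (by norm_num) hm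
  have hnpos : 0 < n := by omega
  set g := Nat.gcd j n with hgdef
  set d := n / g with hd
  set ω := orderOf (2 : ZMod d) with hω
  have hg_dvd_j : g ∣ j := Nat.gcd_dvd_left _ _
  have hg_dvd_n : g ∣ n := Nat.gcd_dvd_right _ _
  have hgpos : 0 < g := Nat.gcd_pos_of_pos_left _ (by omega)
  have hnd : g * d = n := Nat.mul_div_cancel' hg_dvd_n
  have hdn : d ∣ n := Nat.div_dvd_of_dvd hg_dvd_n
  have hdvd_iff : ∀ x, n ∣ j * x ↔ d ∣ x := by
    intro x
    constructor
    · intro h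
      have hcop : Nat.Coprime d (j / g) := (Nat.coprime_div_gcd_div_gcd hgpos).symm
      have hj' : g * (j / g) = j := Nat.mul_div_cancel' hg_dvd_j
      rw [← hnd, ← hj', mul_assoc] at h
      have := (mul_dvd_mul_iff_left (a := g) (by omega)).mp h
      exact hcop.dvd_of_dvd_mul_left this
    · intro h
      rw [← hnd]
      exact mul_dvd_mul hg_dvd_j h
  have hpow : ∀ l, (d ∣ 2 ^ l - 1) ↔ (2 : ZMod d) ^ l = 1 := by
    intro l
    have h2l : 1 ≤ 2 ^ l := Nat.one_le_two_pow
    rw [← Nat.modEq_iff_dvd' h2l, ← ZMod.natCast_eq_natCast_iff]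
    push_cast
    exact eq_comm
  have hkey : ∀ l, ((a * j % n) * 2 ^ l % n = (a * j % n) % n) ↔ (2 : ZMod d) ^ l = 1 := by
    intro l
    have h2l : (0:ℕ) < 2 ^ l := Nat.pow_pos (by norm_num)
    have e1 : ((a * j % n) * 2 ^ l % n = (a * j % n) % n) ↔ a * j * 2 ^ l ≡ a * j [MOD n] := by
      unfold Nat.ModEq
      rw [Nat.mod_mul_mod, Nat.mod_mod_of_dvd _ dvd_rfl]
    have e2 : a * j * 2 ^ l ≡ a * j [MOD n] ↔ n ∣ a * j * (2 ^ l - 1) := by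
      rw [Nat.ModEq.comm, Nat.modEq_iff_dvd' (Nat.le_mul_of_pos_right _ h2l),
        Nat.mul_sub, mul_one]
    have e3 : n ∣ a * j * (2 ^ l - 1) ↔ n ∣ j * (2 ^ l - 1) := by
      rw [mul_assoc]
      constructor
      · intro h
        exact (Nat.Coprime.symm hgcd).dvd_of_dvd_mul_left h
      · intro h
        exact h.mul_left a
    exact e1.trans (e2.trans (e3.trans ((hdvd_iff _).trans (hpow l))))
  have h2m : (2 : ZMod d) ^ m = 1 := (hpow m).mp (by rw [hn] at hdn; exact hdn)
  have hωm : ω ∣ m := orderOf_dvd_iff_pow_eq_one.mpr h2m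
  have hωpos : 0 < ω := by
    rcases Nat.eq_zero_or_pos ω with h0 | h
    · exfalso; rw [h0] at hωm; have := Nat.eq_zero_of_zero_dvd hωm; omega
    · exact h
  have hset : {l : ℕ | 0 < l ∧ (a * j % n) * 2 ^ l % n = (a * j % n) % n}
      = {l : ℕ | 0 < l ∧ ω ∣ l} := by
    ext l
    simp only [Set.mem_setOf_eq, hkey l, hω, orderOf_dvd_iff_pow_eq_one]
  rw [hset]
  have hinf : sInf {l : ℕ | 0 < l ∧ ω ∣ l} = ω := by
    apply le_antisymm
    · exact Nat.sInf_le ⟨hωpos, dvd_rfl⟩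
    · exact le_csInf ⟨ω, hωpos, dvd_rfl⟩ fun b hb => Nat.le_of_dvd hb.1 hb.2
  rw [hinf]
  by_contra hne
  have hωlt : ω < m := lt_of_le_of_ne (Nat.le_of_dvd (by omega) hωm) hne
  obtain ⟨k, hk⟩ := hωm
  have hk2 : 2 ≤ k := by
    rcases Nat.lt_or_ge k 2 with hlt | hge
    · interval_cases k <;> omega
    · exact hge
  have h2ω : 2 * ω ≤ m := by
    calc 2 * ω = ω * 2 := by ring
    _ ≤ ω * k := Nat.mul_le_mul_left _ hk2
    _ = m := hk.symm
  have hd_le : d ≤ 2 ^ ω - 1 := by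
    have h2ω1 : 2 ≤ 2 ^ ω := by
      calc (2:ℕ) = 2 ^ 1 := rfl
      _ ≤ 2 ^ ω := Nat.pow_le_pow_right (by norm_num) hωpos
    exact Nat.le_of_dvd (by omega) ((hpow ω).mpr (pow_orderOf_eq_one 2))
  have hgj : g ≤ j := Nat.le_of_dvd (by omega) hg_dvd_j
  have hn_le : 2 ^ m - 1 ≤ j * (2 ^ ω - 1) := by
    calc 2 ^ m - 1 = g * d := by rw [hnd, hn]
    _ ≤ j * (2 ^ ω - 1) := Nat.mul_le_mul hgj hd_le
  rcases Nat.even_or_odd m with he | ho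
  · -- even case
    obtain ⟨t, ht⟩ := he
    have hj := hje ⟨t, ht⟩
    have hωhalf : ω ≤ m / 2 := by omega
    have h1 : 2 ^ ω ≤ 2 ^ (m / 2) := Nat.pow_le_pow_right (by norm_num) hωhalf
    have h2 : 2 ^ (m / 2) * 2 ^ (m / 2) = 2 ^ m := by
      rw [← pow_add]; congr 1; omega
    have h3 : 2 ^ m - 1 ≤ 2 ^ (m / 2) * (2 ^ (m / 2) - 1) :=
      le_trans hn_le (Nat.mul_le_mul hj (by omega))
    have hP2 : 2 ≤ 2 ^ (m / 2) := by
      calc (2:ℕ) = 2 ^ 1 := rfl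
      _ ≤ 2 ^ (m / 2) := Nat.pow_le_pow_right (by norm_num) (by omega)
    zify [show (1:ℕ) ≤ 2 ^ (m/2) by omega, show (1:ℕ) ≤ 2 ^ m by omega] at h3
    have hP2' : (2:ℤ) ≤ 2 ^ (m / 2) := by exact_mod_cast hP2
    have h6 : ((2:ℤ) ^ (m / 2)) * ((2:ℤ) ^ (m / 2)) = 2 ^ m := by exact_mod_cast h2
    have hexp : ((2:ℤ) ^ (m / 2)) * ((2:ℤ) ^ (m / 2) - 1)
        = (2:ℤ) ^ (m / 2) * (2:ℤ) ^ (m / 2) - (2:ℤ) ^ (m / 2) := by ring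
    linarith [h3, hP2', h6, hexp]
  · -- odd case
    have hj := hjo ho
    obtain ⟨t, ht⟩ := ho
    have hωhalf : ω ≤ (m - 1) / 2 := by omega
    have h1 : 2 ^ ω ≤ 2 ^ ((m - 1) / 2) := Nat.pow_le_pow_right (by norm_num) hωhalf
    have h2 : 2 ^ ((m + 1) / 2) * 2 ^ ((m - 1) / 2) = 2 ^ m := by
      rw [← pow_add]; congr 1; omega
    have h3 : 2 ^ m - 1 ≤ (2 ^ ((m + 1) / 2) - 1) * (2 ^ ((m - 1) / 2) - 1) :=
      le_trans hn_le (Nat.mul_le_mul hj (by omega))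
    have hP2 : 2 ≤ 2 ^ ((m + 1) / 2) := by
      calc (2:ℕ) = 2 ^ 1 := rfl
      _ ≤ _ := Nat.pow_le_pow_right (by norm_num) (by omega)
    have hQ2 : 2 ≤ 2 ^ ((m - 1) / 2) := by
      calc (2:ℕ) = 2 ^ 1 := rfl
      _ ≤ _ := Nat.pow_le_pow_right (by norm_num) (by omega)
    zify [show (1:ℕ) ≤ 2 ^ ((m+1)/2) by omega, show (1:ℕ) ≤ 2 ^ ((m-1)/2) by omega,
      show (1:ℕ) ≤ 2 ^ m by omega] at h3
    have hP2' : (2:ℤ) ≤ 2 ^ ((m + 1) / 2) := by exact_mod_cast hP2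
    have hQ2' : (2:ℤ) ≤ 2 ^ ((m - 1) / 2) := by exact_mod_cast hQ2
    have h6 : ((2:ℤ) ^ ((m + 1) / 2)) * ((2:ℤ) ^ ((m - 1) / 2)) = 2 ^ m := by exact_mod_cast h2
    have hexp : ((2:ℤ) ^ ((m + 1) / 2) - 1) * ((2:ℤ) ^ ((m - 1) / 2) - 1)
        = (2:ℤ) ^ ((m + 1) / 2) * (2:ℤ) ^ ((m - 1) / 2)
          - (2:ℤ) ^ ((m + 1) / 2) - (2:ℤ) ^ ((m - 1) / 2) + 1 := by ring
    linarith [h3, hP2', hQ2', h6, hexp]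

theorem stmt1 (m a j : ℕ) (hm : 2 ≤ m) (hgcd : Nat.gcd a (2 ^ m - 1) = 1)
    (hj1 : j % 2 = 1) (hj2 : 1 ≤ j)
    (hje : Even m → j ≤ 2 ^ (m / 2))
    (hjo : Odd m → j ≤ 2 ^ ((m + 1) / 2) - 1) :
    ell m (a * j % (2 ^ m - 1)) = m := by
  unfold ell
  exact aux_stmt1 m a j _ hm rfl hgcd hj2 hje hjo
end

section
/- Let m ≥ 2, n = 2^m − 1, and let a be an odd integer with 1 ≤ a ≤ n − 1. If l_a is even (which forces m to be even), then the cosets C_a and C_{n−a} are both contained in T_{(1,m)} or both contained in T_{(0,m)}, i.e., v_a ≡ v_{n−a} (mod 2). If m is odd (so l_a is odd), then exactly one of C_a and C_{n−a} is contained in T_{(1,m)}, i.e., v_a + v_{n−a} ≡ 1 (mod 2). -/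
open Polynomial

section helpers


/-- modular flip: `(n - a) * 2^j % n = n - (a * 2^j % n)` -/
lemma flip_mul_mod {n a : ℕ} (hn : 0 < n) (ha : a ≤ n) (j : ℕ)
    (hr : a * 2 ^ j % n ≠ 0) :
    (n - a) * 2 ^ j % n = n - a * 2 ^ j % n := by
  have hq := Nat.div_add_mod (a * 2 ^ j) n
  set q := a * 2 ^ j / n with hqdef
  set r := a * 2 ^ j % n with hrdef
  have hrn : r < n := Nat.mod_lt _ hn
  have hsle : a * 2 ^ j ≤ n * 2 ^ j := Nat.mul_le_mul_right _ ha
  have hqP : q + 1 ≤ 2 ^ j := by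
    by_contra h
    push_neg at h
    have : n * 2 ^ j ≤ n * q := Nat.mul_le_mul_left _ (by omega)
    omega
  obtain ⟨t, ht⟩ : ∃ t, 2 ^ j = q + 1 + t := ⟨2 ^ j - (q + 1), by omega⟩
  have h3 : (n - a) * 2 ^ j = n * 2 ^ j - a * 2 ^ j := Nat.sub_mul n a (2 ^ j)
  have e2 : n * 2 ^ j = n * q + n + n * t := by rw [ht]; ring
  have h1 : (n - a) * 2 ^ j = n * t + (n - r) := by omega
  rw [h1, Nat.mul_add_mod, Nat.mod_eq_of_lt (by omega)]

lemma mul_pow_mod_ne {n a : ℕ} (hodd : n % 2 = 1) (ha0 : 0 < a) (han : a < n) (j : ℕ) :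
    a * 2 ^ j % n ≠ 0 := by
  intro h
  have hd : n ∣ a * 2 ^ j := Nat.dvd_of_mod_eq_zero h
  have hcop : Nat.Coprime n 2 :=
    Nat.coprime_comm.mp (Nat.prime_two.coprime_iff_not_dvd.mpr (by omega))
  have : n ∣ a := (hcop.pow_right j).dvd_of_dvd_mul_right hd
  have := Nat.le_of_dvd ha0 this
  omega

variable {m : ℕ}

lemma pow_m_mod (hm : 2 ≤ m) (a : ℕ) : a * 2 ^ m % (2 ^ m - 1) = a % (2 ^ m - 1) := by
  have h4 : 4 ≤ 2 ^ m := by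
    calc (4:ℕ) = 2 ^ 2 := by norm_num
    _ ≤ 2 ^ m := Nat.pow_le_pow_right (by norm_num) hm
  have h : a * 2 ^ m = (2 ^ m - 1) * a + a := by
    have e : (2 ^ m - 1) * a + a = ((2 ^ m - 1) + 1) * a := by ring
    rw [mul_comm, e]
    congr 1
    omega
  rw [h, Nat.mul_add_mod]

lemma ell_mem (hm : 2 ≤ m) (a : ℕ) :
    0 < ell m a ∧ a * 2 ^ (ell m a) % (2 ^ m - 1) = a % (2 ^ m - 1) := by
  have hne : {l : ℕ | 0 < l ∧ a * 2 ^ l % (2 ^ m - 1) = a % (2 ^ m - 1)}.Nonempty :=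
    ⟨m, by exact ⟨by omega, pow_m_mod hm a⟩⟩
  exact Nat.sInf_mem hne

lemma ell_min {a t : ℕ} (h1 : 0 < t) (h2 : t < ell m a) :
    a * 2 ^ t % (2 ^ m - 1) ≠ a % (2 ^ m - 1) :=
  fun h => Nat.notMem_of_lt_sInf h2 ⟨h1, h⟩

/-- cancellation: if `a*2^i ≡ a*2^j` with `i ≤ j` then `a*2^(j-i) ≡ a`. -/
lemma pow_cancel (hm : 2 ≤ m) {a i j : ℕ} (hij : i ≤ j)
    (h : a * 2 ^ i % (2 ^ m - 1) = a * 2 ^ j % (2 ^ m - 1)) :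
    a * 2 ^ (j - i) % (2 ^ m - 1) = a % (2 ^ m - 1) := by
  have h4 : 4 ≤ 2 ^ m := by
    calc (4:ℕ) = 2 ^ 2 := by norm_num
    _ ≤ 2 ^ m := Nat.pow_le_pow_right (by norm_num) hm
  have hodd : (2 ^ m - 1) % 2 = 1 := by
    have : 2 ∣ 2 ^ m := dvd_pow_self 2 (by omega)
    omega
  have hcop : Nat.gcd (2 ^ m - 1) (2 ^ i) = 1 := by
    have : Nat.Coprime (2 ^ m - 1) 2 :=
      Nat.coprime_comm.mp (Nat.prime_two.coprime_iff_not_dvd.mpr (by omega))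
    exact this.pow_right i
  have heq : a * 2 ^ j = (a * 2 ^ (j - i)) * 2 ^ i := by
    rw [mul_assoc, ← pow_add]
    congr 2
    omega
  have hme : (a * 2 ^ (j - i)) * 2 ^ i ≡ a * 2 ^ i [MOD 2 ^ m - 1] := by
    rw [← heq]
    exact (Nat.ModEq.symm h)
  exact Nat.ModEq.cancel_right_of_coprime hcop hme

lemma coset_card (hm : 2 ≤ m) {a : ℕ} (ha0 : 0 < a) (han : a < 2 ^ m - 1) :
    (coset m a).card = ell m a := by
  have h4 : 4 ≤ 2 ^ m := by
    calc (4:ℕ) = 2 ^ 2 := by norm_num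
    _ ≤ 2 ^ m := Nat.pow_le_pow_right (by norm_num) hm
  rw [coset]
  rw [Finset.card_image_of_injOn, Finset.card_range]
  have main : ∀ i j : ℕ, i < j → j < ell m a →
      a * 2 ^ i % (2 ^ m - 1) ≠ a * 2 ^ j % (2 ^ m - 1) := by
    intro i j hlt hj h
    exact ell_min (show 0 < j - i by omega) (by omega) (pow_cancel hm (le_of_lt hlt) h)
  intro i hi j hj hij
  simp only [Finset.coe_range, Set.mem_Iio] at hi hj
  dsimp only at hij
  rcases lt_trichotomy i j with h | h | h
  · exact absurd hij (main i j h hj)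
  · exact h
  · exact absurd hij.symm (main j i h hi)

lemma ell_dvd (hm : 2 ≤ m) (a : ℕ) : ell m a ∣ m := by
  obtain ⟨hl0, hl⟩ := ell_mem hm a
  set l := ell m a with hldef
  have hl' : a * 2 ^ l ≡ a [MOD 2 ^ m - 1] := hl
  have key : ∀ k, a * 2 ^ (k * l) ≡ a [MOD 2 ^ m - 1] := by
    intro k
    induction k with
    | zero => simp [Nat.ModEq.refl]
    | succ k ih =>
      have he : a * 2 ^ ((k+1) * l) = (a * 2 ^ (k * l)) * 2 ^ l := by
        rw [mul_assoc, ← pow_add]; congr 2; ring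
      rw [he]
      exact (Nat.ModEq.mul_right _ ih).trans hl'
  have hdm := Nat.div_add_mod m l
  set r := m % l with hr
  have hrl : r < l := Nat.mod_lt _ hl0
  by_contra hnd
  have hr0 : 0 < r := by
    rcases Nat.eq_zero_or_pos r with h | h
    · exact (hnd (Nat.dvd_of_mod_eq_zero h)).elim
    · exact h
  have h1 : a * 2 ^ m = (a * 2 ^ ((m / l) * l)) * 2 ^ r := by
    rw [mul_assoc, ← pow_add]
    congr 2
    have hcom : m / l * l = l * (m / l) := Nat.mul_comm _ _
    omega
  have h2 : (a * 2 ^ ((m / l) * l)) * 2 ^ r ≡ a * 2 ^ r [MOD 2 ^ m - 1] :=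
    Nat.ModEq.mul_right _ (key (m / l))
  have hpm : a * 2 ^ m ≡ a [MOD 2 ^ m - 1] := pow_m_mod hm a
  have h3 : a * 2 ^ r ≡ a [MOD 2 ^ m - 1] := h2.symm.trans (h1 ▸ hpm)
  exact ell_min hr0 hrl h3


end helpers

theorem stmt2 (m a : ℕ) (hm : 2 ≤ m) (ha1 : a % 2 = 1) (ha2 : 1 ≤ a)
    (ha3 : a ≤ 2 ^ m - 1 - 1) :
    (Even (ell m a) → vv m a = vv m (2 ^ m - 1 - a)) ∧
    (Odd m → (vv m a + vv m (2 ^ m - 1 - a)) % 2 = 1) := by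
  have h4 : 4 ≤ 2 ^ m := by
    calc (4:ℕ) = 2 ^ 2 := by norm_num
    _ ≤ 2 ^ m := Nat.pow_le_pow_right (by norm_num) hm
  have hn0 : 0 < 2 ^ m - 1 := by omega
  have hodd : (2 ^ m - 1) % 2 = 1 := by
    have : 2 ∣ 2 ^ m := dvd_pow_self 2 (by omega)
    omega
  have han : a < 2 ^ m - 1 := by omega
  obtain ⟨hla0, hla⟩ := ell_mem hm a
  have hamod : a % (2 ^ m - 1) = a := Nat.mod_eq_of_lt han
  have hbmod : (2 ^ m - 1 - a) % (2 ^ m - 1) = 2 ^ m - 1 - a := Nat.mod_eq_of_lt (by omega)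
  have hflip : ∀ j, (2 ^ m - 1 - a) * 2 ^ j % (2 ^ m - 1)
      = 2 ^ m - 1 - a * 2 ^ j % (2 ^ m - 1) := fun j =>
    flip_mul_mod hn0 (by omega) j (mul_pow_mod_ne hodd (by omega) han j)
  have hltj : ∀ j, a * 2 ^ j % (2 ^ m - 1) < 2 ^ m - 1 := fun j => Nat.mod_lt _ hn0
  have hne0 : ∀ j, a * 2 ^ j % (2 ^ m - 1) ≠ 0 := fun j =>
    mul_pow_mod_ne hodd (by omega) han j
  -- ell equality
  have hellba : ell m (2 ^ m - 1 - a) = ell m a := by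
    rw [ell, ell]
    congr 1
    ext t
    simp only [Set.mem_setOf_eq]
    constructor
    · rintro ⟨ht, he⟩
      refine ⟨ht, ?_⟩
      rw [hflip t, hbmod] at he
      have := hltj t
      rw [hamod]
      omega
    · rintro ⟨ht, he⟩
      refine ⟨ht, ?_⟩
      rw [hflip t, hbmod]
      rw [hamod] at he
      omega
  -- coset of b as flipped image
  have hcosetb : coset m (2 ^ m - 1 - a)
      = (coset m a).image (fun x => 2 ^ m - 1 - x) := by
    rw [coset, coset, hellba, Finset.image_image]
    apply Finset.image_congr
    intro j hj
    simp only [Function.comp_apply]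
    rw [hflip j]
  have hmemlt : ∀ x ∈ coset m a, x < 2 ^ m - 1 ∧ x ≠ 0 := by
    intro x hx
    rw [coset, Finset.mem_image] at hx
    obtain ⟨j, _, rfl⟩ := hx
    exact ⟨hltj j, hne0 j⟩
  have hinj : Set.InjOn (fun x => 2 ^ m - 1 - x) (coset m a) := by
    intro x hx y hy hxy
    have h1 := (hmemlt x hx).1
    have h2 := (hmemlt y hy).1
    dsimp only at hxy
    omega
  have hcard : (coset m a).card = ell m a := coset_card hm (by omega) han
  -- rho relation
  have e1 : ((coset m (2 ^ m - 1 - a)).filter (fun x => x % 2 = 0))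
      = (((coset m a).filter (fun x => ¬ x % 2 = 0)).image (fun x => 2 ^ m - 1 - x)) := by
    rw [hcosetb, Finset.filter_image]
    congr 1
    apply Finset.filter_congr
    intro x hx
    have h1 := (hmemlt x hx).1
    omega
  have hrhosum : rho m (2 ^ m - 1 - a) + rho m a = ell m a := by
    rw [rho, rho, e1,
      Finset.card_image_of_injOn (hinj.mono (Finset.coe_subset.mpr (Finset.filter_subset _ _)))]
    have := Finset.card_filter_add_card_filter_not
      (s := coset m a) (p := fun x => x % 2 = 0)
    omega
  -- arithmetic finish
  obtain ⟨k, hk⟩ := ell_dvd hm a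
  have hmrhoa : m * rho m a = ell m a * (k * rho m a) := by
    rw [← mul_assoc, ← hk]
  have hva : vv m a = (k * rho m a) % 2 := by
    rw [vv, hmrhoa, Nat.mul_div_cancel_left _ hla0]
  have hmrhob : m * rho m (2 ^ m - 1 - a) = ell m a * (k * rho m (2 ^ m - 1 - a)) := by
    rw [← mul_assoc, ← hk]
  have hvb : vv m (2 ^ m - 1 - a) = (k * rho m (2 ^ m - 1 - a)) % 2 := by
    rw [vv, hellba, hmrhob, Nat.mul_div_cancel_left _ hla0]
  have hsum : k * rho m a + k * rho m (2 ^ m - 1 - a) = m := by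
    rw [← Nat.mul_add]
    have hx : rho m a + rho m (2 ^ m - 1 - a) = ell m a := by omega
    rw [hx]
    have hc : k * ell m a = ell m a * k := Nat.mul_comm _ _
    omega
  constructor
  · intro hev
    have h2l : 2 ∣ ell m a := hev.two_dvd
    have h2m : 2 ∣ m := by
      rw [hk]; exact Dvd.dvd.mul_right h2l k
    rw [hva, hvb]
    omega
  · intro hom
    have hm1 : m % 2 = 1 := Nat.odd_iff.mp hom
    rw [hva, hvb]
    omega
end

section
/- Let m ≥ 2 and n = 2^m − 1. If m is odd, then T_{(1,m)} = N_{(0,m)} ∪ {0} and T_{(0,m)} = N_{(1,m)}. If m is even, then T_{(0,m)} = N_{(0,m)} ∪ {0} and T_{(1,m)} = N_{(1,m)}. -/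
open Polynomial

lemma wt2_zero : wt2 0 = 0 := by simp [wt2]

lemma wt2_rec {a : ℕ} (ha : 0 < a) : wt2 a = a % 2 + wt2 (a / 2) := by
  rw [wt2, wt2, Nat.digits_def' (by norm_num : (1:ℕ) < 2) ha, List.sum_cons]

lemma wt2_eq_card_s5 (m : ℕ) : ∀ i < 2 ^ m,
    wt2 i = ((Finset.range m).filter (fun k => i.testBit k)).card := by
  induction m with
  | zero => intro i hi; interval_cases i; simp [wt2]
  | succ m ih =>
    intro i hi
    rcases Nat.eq_zero_or_pos i with h | h
    · subst h; simp [wt2]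
    have hdiv : i / 2 < 2 ^ m := by
      rw [Nat.div_lt_iff_lt_mul (by norm_num)]
      calc i < 2 ^ (m+1) := hi
        _ = 2 ^ m * 2 := by ring
    rw [wt2_rec h, Finset.card_filter, Finset.sum_range_succ']
    simp only [Nat.testBit_succ]
    rw [← Finset.card_filter, ← ih (i/2) hdiv]
    have : (if i.testBit 0 then 1 else 0) = i % 2 := by
      rcases Nat.mod_two_eq_zero_or_one i with h2 | h2 <;>
        simp [Nat.testBit_zero, h2]
    omega

lemma wt2_le (m i : ℕ) (hi : i < 2 ^ m) : wt2 i ≤ m := by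
  rw [wt2_eq_card_s5 m i hi]
  calc ((Finset.range m).filter (fun k => i.testBit k)).card
      ≤ (Finset.range m).card := Finset.card_filter_le _ _
    _ = m := Finset.card_range m

lemma key (m : ℕ) (hm : 2 ≤ m) (i : ℕ) (hi : i < 2 ^ m - 1) :
    0 < ell m i ∧ m * rho m i = ell m i * (m - wt2 i) := by
  have hm0 : 0 < m := by omega
  have h4 : (4:ℕ) ≤ 2 ^ m := by
    calc (4:ℕ) = 2 ^ 2 := by norm_num
    _ ≤ 2 ^ m := Nat.pow_le_pow_right (by norm_num) hm
  set n := 2 ^ m - 1 with hn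
  have hn1 : 1 < n := by omega
  have hpow : 2 ^ m % n = 1 := by
    have h1 : 2 ^ m = n + 1 := by omega
    rw [h1, Nat.add_mod_left]
    exact Nat.mod_eq_of_lt hn1
  have hiS : i % n = i := Nat.mod_eq_of_lt (by omega)
  have hshift : ∀ k : ℕ, i * 2 ^ (k + m) % n = i * 2 ^ k % n := by
    intro k
    have h1 : i * 2 ^ (k + m) = i * 2 ^ k * 2 ^ m := by rw [pow_add]; ring
    rw [h1, Nat.mul_mod, hpow, mul_one, Nat.mod_mod_of_dvd _ dvd_rfl]
  have hshift0 : i * 2 ^ m % n = i := by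
    have := hshift 0
    simpa [hiS] using this
  -- basic properties of ell
  have hellmem : 0 < ell m i ∧ i * 2 ^ ell m i % n = i % n := by
    have h1 : ell m i ∈ {l : ℕ | 0 < l ∧ i * 2 ^ l % (2 ^ m - 1) = i % (2 ^ m - 1)} :=
      Nat.sInf_mem ⟨m, hm0, by rw [← hn, hshift0, hiS]⟩
    rw [← hn] at h1
    exact h1
  have hellmin : ∀ k, 0 < k → i * 2 ^ k % n = i % n → ell m i ≤ k := by
    intro k h1 h2
    rw [hn] at h2
    exact Nat.sInf_le ⟨h1, h2⟩
  set l := ell m i with hl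
  have hl_pos : 0 < l := hellmem.1
  have hl_le : l ≤ m := hellmin m hm0 (by rw [hshift0, hiS])
  have hper : ∀ k : ℕ, i * 2 ^ (k + l) % n = i * 2 ^ k % n := by
    intro k
    have h1 : i * 2 ^ (k + l) = i * 2 ^ l * 2 ^ k := by rw [pow_add]; ring
    rw [h1, Nat.mul_mod, hellmem.2, ← Nat.mul_mod]
  have hperq : ∀ q k : ℕ, i * 2 ^ (k + q * l) % n = i * 2 ^ k % n := by
    intro q
    induction q with
    | zero => simp
    | succ q ih =>
      intro k
      have h1 : k + (q+1) * l = (k + q * l) + l := by ring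
      rw [h1, hper, ih]
  have hdvd : l ∣ m := by
    by_contra hnd
    have hr : 0 < m % l := Nat.pos_of_ne_zero (fun h => hnd (Nat.dvd_of_mod_eq_zero h))
    have h2 : m % l + m / l * l = m := Nat.mod_add_div' m l
    have h1 : i * 2 ^ (m % l) % n = i % n := by
      calc i * 2 ^ (m % l) % n = i * 2 ^ (m % l + m / l * l) % n := (hperq _ _).symm
        _ = i * 2 ^ m % n := by rw [h2]
        _ = i % n := by rw [hshift0, hiS]
    have h5 := hellmin _ hr h1
    have h6 := Nat.mod_lt m hl_pos
    omega
  -- injectivity on range l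
  have hinj0 : ∀ j k, j < k → k < l → i * 2 ^ j % n = i * 2 ^ k % n → False := by
    intro j k hjk hkl hfe
    have hj : j ≤ m := by omega
    have e2 : i * 2 ^ k * 2 ^ (m - j) % n = i % n := by
      rw [Nat.mul_mod, ← hfe, ← Nat.mul_mod]
      have h1 : i * 2 ^ j * 2 ^ (m - j) = i * 2 ^ m := by
        rw [mul_assoc, ← pow_add]
        congr 2
        omega
      rw [h1, hshift0, hiS]
    have e1 : i * 2 ^ k * 2 ^ (m - j) % n = i * 2 ^ (k - j) % n := by
      have h1 : i * 2 ^ k * 2 ^ (m - j) = i * 2 ^ ((k - j) + m) := by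
        rw [mul_assoc, ← pow_add]
        congr 2
        omega
      rw [h1]
      exact hshift (k - j)
    have h5 := hellmin (k - j) (by omega) (by rw [← e1, e2])
    omega
  have hinj : Set.InjOn (fun j => i * 2 ^ j % n) (Finset.range l) := by
    intro a ha b hb hab
    simp only [Finset.coe_range, Set.mem_Iio] at ha hb
    simp only at hab
    rcases lt_trichotomy a b with h | h | h
    · exact absurd hab (fun he => hinj0 a b h hb he)
    · exact h
    · exact absurd hab.symm (fun he => hinj0 b a h ha he)
  -- parity formula
  have hformula : ∀ j, 0 < j → j ≤ m → i * 2 ^ j % n % 2 = i / 2 ^ (m - j) % 2 := by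
    intro j hj0 hjm
    set P := 2 ^ j with hP
    set Q := 2 ^ (m - j) with hQ
    have hP0 : 0 < P := Nat.pow_pos (by norm_num)
    have hQ0 : 0 < Q := Nat.pow_pos (by norm_num)
    have hPQ : Q * P = 2 ^ m := by rw [hP, hQ, ← pow_add]; congr 1; omega
    set a := i % Q with hadef
    set b := i / Q with hbdef
    have ha : a < Q := Nat.mod_lt _ hQ0
    have hb : b < P := by
      rw [hbdef, Nat.div_lt_iff_lt_mul hQ0]
      have h1 : P * Q = 2 ^ m := by rw [mul_comm]; exact hPQ
      omega
    have hin : Q * b + a = i := Nat.div_add_mod i Q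
    have hQPn : Q * P = n + 1 := by omega
    have hH : Q * b + a + 2 ≤ Q * P := by omega
    have hlt : a * P + b + 2 ≤ Q * P := by
      rcases Nat.lt_or_ge (a + 2) (Q + 1) with hc | hc
      · have e1 : (a + 2) * P ≤ Q * P := Nat.mul_le_mul_right P (by omega)
        rw [add_mul] at e1
        have hP1 : 1 ≤ P := hP0
        linarith
      · have ha1 : a + 1 = Q := by omega
        have e2 : Q * (b + 1) < Q * P := by
          rw [mul_add, mul_one]
          omega
        have e3 : b + 1 < P := lt_of_mul_lt_mul_left e2 (Nat.zero_le Q)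
        have e4 : (a + 1) * P = Q * P := by rw [ha1]
        rw [add_mul, one_mul] at e4
        linarith
    have hval : i * P % n = a * P + b := by
      have hexp : i * P = (a * P + b) + b * n := by
        calc i * P = (Q * b + a) * P := by rw [hin]
          _ = a * P + b * (Q * P) := by ring
          _ = a * P + b * (n + 1) := by rw [hQPn]
          _ = (a * P + b) + b * n := by ring
      rw [hexp, Nat.add_mul_mod_self_right]
      exact Nat.mod_eq_of_lt (by omega)
    have hPeven : P % 2 = 0 := by
      rw [hP]
      have h1 : (2:ℕ) ^ j = 2 * 2 ^ (j - 1) := by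
        rw [← pow_succ']
        congr 1
        omega
      omega
    have haP : a * P % 2 = 0 := by
      rw [Nat.mul_mod, hPeven, mul_zero, Nat.zero_mod]
    omega
  have hf0 : i * 2 ^ 0 % n = i := by simpa using hiS
  have hsub : ∀ a : ℕ, 0 < a → a < m → (m - a) % m = m - a := by
    intro a h1 h2
    exact Nat.mod_eq_of_lt (by omega)
  have hparity : ∀ j < m, (i * 2 ^ j % n % 2 = 1 ↔ i.testBit ((m - j) % m) = true) := by
    intro j hj
    rcases Nat.eq_zero_or_pos j with h | h
    · subst h
      rw [Nat.sub_zero, Nat.mod_self, hf0, Nat.testBit_zero]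
      simp
    · rw [hsub j h hj, hformula j h (by omega), Nat.testBit_eq_decide_div_mod_eq]
      simp
  -- count over range m
  have hcard_m : ((Finset.range m).filter (fun j => i * 2 ^ j % n % 2 = 1)).card = wt2 i := by
    rw [wt2_eq_card_s5 m i (by omega)]
    apply Finset.card_nbij' (fun j => (m - j) % m) (fun k => (m - k) % m)
    · intro a ha
      simp only [Finset.mem_coe, Finset.mem_filter, Finset.mem_range] at ha ⊢
      exact ⟨Nat.mod_lt _ hm0, (hparity a ha.1).mp ha.2⟩
    · intro b hb
      simp only [Finset.mem_coe, Finset.mem_filter, Finset.mem_range] at hb ⊢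
      have h1 : (m - b) % m < m := Nat.mod_lt _ hm0
      refine ⟨h1, ?_⟩
      rw [hparity _ h1]
      rcases Nat.eq_zero_or_pos b with h | h
      · subst h
        simpa [Nat.mod_self] using hb.2
      · rw [hsub b h hb.1]
        have h4 : m - (m - b) = b := by omega
        rw [h4, Nat.mod_eq_of_lt hb.1]
        exact hb.2
    · intro a ha
      simp only [Finset.mem_coe, Finset.mem_filter, Finset.mem_range] at ha
      rcases Nat.eq_zero_or_pos a with h | h
      · subst h; simp [Nat.mod_self]
      · beta_reduce; rw [hsub a h ha.1]
        have h4 : m - (m - a) = a := by omega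
        rw [h4]
        exact Nat.mod_eq_of_lt ha.1
    · intro b hb
      simp only [Finset.mem_coe, Finset.mem_filter, Finset.mem_range] at hb
      rcases Nat.eq_zero_or_pos b with h | h
      · subst h; simp [Nat.mod_self]
      · beta_reduce; rw [hsub b h hb.1]
        have h4 : m - (m - b) = b := by omega
        rw [h4]
        exact Nat.mod_eq_of_lt hb.1
  -- even/odd split
  have hsplit : ∀ N : ℕ, ((Finset.range N).filter (fun j => i * 2 ^ j % n % 2 = 0)).card
      + ((Finset.range N).filter (fun j => i * 2 ^ j % n % 2 = 1)).card = N := by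
    intro N
    have h1 : ∀ x : ℕ, ((if i * 2 ^ x % n % 2 = 0 then 1 else 0)
        + (if i * 2 ^ x % n % 2 = 1 then 1 else 0)) = 1 := by
      intro x
      rcases Nat.mod_two_eq_zero_or_one (i * 2 ^ x % n) with h | h <;> simp [h]
    rw [Finset.card_filter, Finset.card_filter, ← Finset.sum_add_distrib,
      Finset.sum_congr rfl (fun x _ => h1 x), Finset.sum_const, Finset.card_range,
      smul_eq_mul, mul_one]
  set c := ((Finset.range l).filter (fun j => i * 2 ^ j % n % 2 = 0)).card with hc
  have hblock : ∀ q : ℕ, ((Finset.range (q * l)).filter (fun j => i * 2 ^ j % n % 2 = 0)).card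
      = q * c := by
    intro q
    induction q with
    | zero => simp
    | succ q ih =>
      have h1 : (q + 1) * l = q * l + l := by ring
      have h2 : ∀ x : ℕ, i * 2 ^ (q * l + x) % n = i * 2 ^ x % n := by
        intro x
        rw [add_comm]
        exact hperq q x
      calc ((Finset.range ((q+1) * l)).filter (fun j => i * 2 ^ j % n % 2 = 0)).card
          = ∑ x ∈ Finset.range (q * l + l), (if i * 2 ^ x % n % 2 = 0 then 1 else 0) := by
            rw [h1, Finset.card_filter]
        _ = (∑ x ∈ Finset.range (q * l), if i * 2 ^ x % n % 2 = 0 then 1 else 0)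
            + ∑ x ∈ Finset.range l, (if i * 2 ^ (q * l + x) % n % 2 = 0 then 1 else 0) :=
            Finset.sum_range_add _ _ _
        _ = (∑ x ∈ Finset.range (q * l), if i * 2 ^ x % n % 2 = 0 then 1 else 0)
            + ∑ x ∈ Finset.range l, (if i * 2 ^ x % n % 2 = 0 then 1 else 0) := by
            congr 1
            exact Finset.sum_congr rfl fun x _ => by rw [h2 x]
        _ = ((Finset.range (q * l)).filter (fun j => i * 2 ^ j % n % 2 = 0)).card + c := by
            rw [Finset.card_filter, hc, Finset.card_filter]
        _ = q * c + c := by rw [ih]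
        _ = (q + 1) * c := by ring
  have hrho : rho m i = c := by
    have h0 : coset m i = (Finset.range l).image (fun j => i * 2 ^ j % n) := by
      rw [coset, hn]
    rw [rho, h0, Finset.filter_image, hc]
    exact Finset.card_image_of_injOn
      (hinj.mono (Finset.coe_subset.mpr (Finset.filter_subset _ _)))
  obtain ⟨q, hq⟩ := hdvd
  have hql : q * l = m := by rw [mul_comm]; exact hq.symm
  have hbm := hblock q
  rw [hql] at hbm
  have hs := hsplit m
  have hqc : q * c = m - wt2 i := by omega
  refine ⟨hl_pos, ?_⟩
  rw [hrho, ← hqc, hq]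
  ring

lemma vv_eq (m : ℕ) (hm : 2 ≤ m) (i : ℕ) (hi : i < 2 ^ m - 1) :
    vv m i = (m - wt2 i) % 2 := by
  obtain ⟨h1, h2⟩ := key m hm i hi
  rw [vv, h2, Nat.mul_div_cancel_left _ h1]

lemma pow4 (m : ℕ) (hm : 2 ≤ m) : (4:ℕ) ≤ 2 ^ m := by
  calc (4:ℕ) = 2 ^ 2 := by norm_num
  _ ≤ 2 ^ m := Nat.pow_le_pow_right (by norm_num) hm

lemma Tset_eq_A (m : ℕ) (hm : 2 ≤ m) (j : ℕ) (hjm : m % 2 = j) :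
    Tset m j = Nset m 0 ∪ {0} := by
  have h4 := pow4 m hm
  ext x
  simp only [Tset, Nset, Finset.mem_filter, Finset.mem_range, Finset.mem_union,
    Finset.mem_singleton]
  by_cases hx : x < 2 ^ m - 1
  · have h1 := vv_eq m hm x hx
    have h2 : wt2 x ≤ m := wt2_le m x (by omega)
    have h5 : x = 0 → wt2 x = 0 := fun h => by rw [h]; exact wt2_zero
    omega
  · omega

lemma Tset_eq_B (m : ℕ) (hm : 2 ≤ m) (j : ℕ) (hjm : m % 2 ≠ j) (hj : j < 2) :
    Tset m j = Nset m 1 := by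
  have h4 := pow4 m hm
  ext x
  simp only [Tset, Nset, Finset.mem_filter, Finset.mem_range]
  by_cases hx : x < 2 ^ m - 1
  · have h1 := vv_eq m hm x hx
    have h2 : wt2 x ≤ m := wt2_le m x (by omega)
    have h5 : x = 0 → wt2 x = 0 := fun h => by rw [h]; exact wt2_zero
    omega
  · omega

theorem stmt5 (m : ℕ) (hm : 2 ≤ m) :
    (Odd m → Tset m 1 = Nset m 0 ∪ {0} ∧ Tset m 0 = Nset m 1) ∧
    (Even m → Tset m 0 = Nset m 0 ∪ {0} ∧ Tset m 1 = Nset m 1) := by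
  refine ⟨fun ho => ?_, fun he => ?_⟩
  · have h1 : m % 2 = 1 := Nat.odd_iff.mp ho
    exact ⟨Tset_eq_A m hm 1 h1, Tset_eq_B m hm 0 (by omega) (by omega)⟩
  · have h1 : m % 2 = 0 := Nat.even_iff.mp he
    exact ⟨Tset_eq_A m hm 0 h1, Tset_eq_B m hm 1 (by omega) (by omega)⟩
end
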